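/- For α > 0, the function u₀(x₁,x₂) = x₁^{α+1}e^{−1/x₁^α} + x₁^{α+1}e^{1/x₁^α}x₂² satisfies, at points with x₂² = s² h(x₁)² e^{−2/x₁^α} (s² < 1), det D²u₀ = 2α²{(1−s²) + (α+1)x₁^α(1+s²)/α} + O(x₁^{2α}) as x₁ → 0⁺; in particular det D²u₀ is positive and bounded near the origin in the cusp {|x₂| < h(x₁)e^{−1/x₁^α}}. -/

import Mathlib

open Asymptotics Real

/-- The Hessian determinant of u : ℝ × ℝ → ℝ at p, via iterated Fréchet derivatives. -/
noncomputable def detD2 (u : ℝ × ℝ → ℝ) (p : ℝ × ℝ) : ℝ :=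
  fderiv ℝ (fun x => fderiv ℝ u x (1, 0)) p (1, 0) *
      fderiv ℝ (fun x => fderiv ℝ u x (0, 1)) p (0, 1) -
    fderiv ℝ (fun x => fderiv ℝ u x (0, 1)) p (1, 0) *
      fderiv ℝ (fun x => fderiv ℝ u x (1, 0)) p (0, 1)


noncomputable def fa (α x : ℝ) : ℝ := x ^ (α+1) * Real.exp (-1 / x^α)
noncomputable def ga (α x : ℝ) : ℝ := x ^ (α+1) * Real.exp (1 / x^α)
noncomputable def fa1 (α x : ℝ) : ℝ := Real.exp (-1 / x^α) * ((α+1)*x^α + α)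
noncomputable def ga1 (α x : ℝ) : ℝ := Real.exp (1 / x^α) * ((α+1)*x^α + -α)
noncomputable def fa2 (α x : ℝ) : ℝ :=
  Real.exp (-1 / x^α) * (α * x^(-α-1)) * ((α+1)*x^α + α) + Real.exp (-1 / x^α) * ((α+1)*(α*x^(α-1)))
noncomputable def ga2 (α x : ℝ) : ℝ :=
  Real.exp (1 / x^α) * (-(α * x^(-α-1))) * ((α+1)*x^α + -α) + Real.exp (1 / x^α) * ((α+1)*(α*x^(α-1)))

lemma ioi_ev {x : ℝ} (hx : 0 < x) (F G : ℝ → ℝ)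
    (h : ∀ y : ℝ, 0 < y → F y = G y) : F =ᶠ[nhds x] G :=
  Filter.eventually_of_mem (Ioi_mem_nhds hx) h

lemma neg_rpow_eq {y : ℝ} (α : ℝ) (hy : 0 < y) : -(y^(-α)) = -1 / y^α := by
  rw [Real.rpow_neg hy.le]; ring

lemma pos_rpow_eq {y : ℝ} (α : ℝ) (hy : 0 < y) : (y^(-α) : ℝ) = 1 / y^α := by
  rw [Real.rpow_neg hy.le]; ring

lemma hexp_neg {α x : ℝ} (hx : 0 < x) :
    HasDerivAt (fun y : ℝ => Real.exp (-1 / y^α)) (Real.exp (-1 / x^α) * (α * x^(-α-1))) x := by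
  have h1 : HasDerivAt (fun y : ℝ => y^(-α)) (-α * x^(-α-1)) x :=
    Real.hasDerivAt_rpow_const (Or.inl hx.ne')
  have h3 : HasDerivAt (fun y : ℝ => Real.exp (-(y^(-α)))) (Real.exp (-1 / x^α) * (α * x^(-α-1))) x := by
    convert h1.neg.exp using 1
    · rfl
    simp only [Pi.neg_apply]; rw [neg_rpow_eq α hx]; ring
  exact h3.congr_of_eventuallyEq (ioi_ev hx _ _ (fun y hy => by rw [neg_rpow_eq α hy]))

lemma hexp_pos {α x : ℝ} (hx : 0 < x) :
    HasDerivAt (fun y : ℝ => Real.exp (1 / y^α)) (Real.exp (1 / x^α) * (-(α * x^(-α-1)))) x := by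
  have h1 : HasDerivAt (fun y : ℝ => y^(-α)) (-α * x^(-α-1)) x :=
    Real.hasDerivAt_rpow_const (Or.inl hx.ne')
  have h3 : HasDerivAt (fun y : ℝ => Real.exp (y^(-α))) (Real.exp (1 / x^α) * (-(α * x^(-α-1)))) x := by
    convert h1.exp using 1
    rw [pos_rpow_eq α hx]; ring
  exact h3.congr_of_eventuallyEq (ioi_ev hx _ _ (fun y hy => by rw [pos_rpow_eq α hy]))

lemma hpow1 {α x : ℝ} (hx : 0 < x) :
    HasDerivAt (fun y : ℝ => y^(α+1)) ((α+1) * x^α) x := by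
  have := Real.hasDerivAt_rpow_const (x := x) (p := α+1) (Or.inl hx.ne')
  convert this using 2
  norm_num

lemma key1 {α x : ℝ} (hx : 0 < x) : x^(-α-1) * x^(α+1) = 1 := by
  rw [← Real.rpow_add hx]; norm_num

lemma hfa {α x : ℝ} (hx : 0 < x) : HasDerivAt (fa α) (fa1 α x) x := by
  have h := (hpow1 (α := α) hx).mul (hexp_neg (α := α) hx)
  refine h.congr_deriv (Eq.symm ?_)
  unfold fa1
  linear_combination (-(Real.exp (-1 / x^α) * α)) * key1 (α := α) hx

lemma hga {α x : ℝ} (hx : 0 < x) : HasDerivAt (ga α) (ga1 α x) x := by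
  have h := (hpow1 (α := α) hx).mul (hexp_pos (α := α) hx)
  refine h.congr_deriv (Eq.symm ?_)
  unfold ga1
  linear_combination (Real.exp (1 / x^α) * α) * key1 (α := α) hx

lemma hpoly {α x : ℝ} (c : ℝ) (hx : 0 < x) :
    HasDerivAt (fun y : ℝ => (α+1)*y^α + c) ((α+1)*(α*x^(α-1))) x :=
  (((Real.hasDerivAt_rpow_const (x := x) (p := α) (Or.inl hx.ne')).const_mul (α+1)).add_const c)

lemma hfa1 {α x : ℝ} (hx : 0 < x) : HasDerivAt (fa1 α) (fa2 α x) x :=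
  (hexp_neg (α := α) hx).mul (hpoly (α := α) α hx)

lemma hga1 {α x : ℝ} (hx : 0 < x) : HasDerivAt (ga1 α) (ga2 α x) x :=
  (hexp_pos (α := α) hx).mul (hpoly (α := α) (-α) hx)

lemma hU {α : ℝ} (u₀ : ℝ × ℝ → ℝ)
    (hu₀ : ∀ p : ℝ × ℝ, u₀ p =
      p.1 ^ (α + 1) * Real.exp (-1 / p.1 ^ α) +
        p.1 ^ (α + 1) * Real.exp (1 / p.1 ^ α) * p.2 ^ 2)
    (q : ℝ × ℝ) (hq : 0 < q.1) :
    fderiv ℝ u₀ q (1,0) = fa1 α q.1 + ga1 α q.1 * q.2^2 ∧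
    fderiv ℝ u₀ q (0,1) = ga α q.1 * (2*q.2) := by
  have hfun : u₀ = fun p : ℝ×ℝ => fa α p.1 + ga α p.1 * p.2^2 := funext fun p => hu₀ p
  subst hfun
  have h1 : HasFDerivAt (fun p : ℝ×ℝ => fa α p.1)
      ((fa1 α q.1) • ContinuousLinearMap.fst ℝ ℝ ℝ) q :=
    (hfa hq).comp_hasFDerivAt q hasFDerivAt_fst
  have h2 : HasFDerivAt (fun p : ℝ×ℝ => ga α p.1)
      ((ga1 α q.1) • ContinuousLinearMap.fst ℝ ℝ ℝ) q :=
    (hga hq).comp_hasFDerivAt q hasFDerivAt_fst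
  have h3 : HasFDerivAt (fun p : ℝ×ℝ => p.2^2)
      ((2*q.2) • ContinuousLinearMap.snd ℝ ℝ ℝ) q := by
    have h := HasDerivAt.comp_hasFDerivAt (f' := ContinuousLinearMap.snd ℝ ℝ ℝ) q
      (hasDerivAt_pow 2 q.2) hasFDerivAt_snd
    simpa [Function.comp_def] using h
  have h4 : fderiv ℝ (fun p : ℝ×ℝ => fa α p.1 + ga α p.1 * p.2^2) q = _ := (h1.add (h2.mul h3)).fderiv
  refine ⟨?_, ?_⟩ <;> rw [h4] <;> simp <;> ring

lemma detkey {α : ℝ} (hα : 0 < α) (u₀ : ℝ × ℝ → ℝ)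
    (hu₀ : ∀ p : ℝ × ℝ, u₀ p =
      p.1 ^ (α + 1) * Real.exp (-1 / p.1 ^ α) +
        p.1 ^ (α + 1) * Real.exp (1 / p.1 ^ α) * p.2 ^ 2)
    (p : ℝ × ℝ) (hp : 0 < p.1) :
    detD2 u₀ p = 2*α*(α + (α+1)*p.1^α + (α+1)*(p.1^α)^2)
      + p.2^2 * Real.exp (1/p.1^α)^2 *
        (2*α*(α - (α+1)*p.1^α + (α+1)*(p.1^α)^2) - 4*((α+1)*p.1^α - α)^2) := by
  have hop : {q : ℝ×ℝ | 0 < q.1} ∈ nhds p :=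
    (isOpen_lt continuous_const continuous_fst).mem_nhds hp
  have hev1 : (fun x => fderiv ℝ u₀ x (1,0)) =ᶠ[nhds p]
      (fun q : ℝ×ℝ => fa1 α q.1 + ga1 α q.1 * q.2^2) :=
    Filter.eventually_of_mem hop (fun q hq => (hU u₀ hu₀ q hq).1)
  have hev2 : (fun x => fderiv ℝ u₀ x (0,1)) =ᶠ[nhds p]
      (fun q : ℝ×ℝ => ga α q.1 * (2*q.2)) :=
    Filter.eventually_of_mem hop (fun q hq => (hU u₀ hu₀ q hq).2)
  unfold detD2
  rw [hev1.fderiv_eq, hev2.fderiv_eq]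
  have h1 : HasFDerivAt (fun q : ℝ×ℝ => fa1 α q.1)
      ((fa2 α p.1) • ContinuousLinearMap.fst ℝ ℝ ℝ) p :=
    (hfa1 hp).comp_hasFDerivAt p hasFDerivAt_fst
  have h2 : HasFDerivAt (fun q : ℝ×ℝ => ga1 α q.1)
      ((ga2 α p.1) • ContinuousLinearMap.fst ℝ ℝ ℝ) p :=
    (hga1 hp).comp_hasFDerivAt p hasFDerivAt_fst
  have h3 : HasFDerivAt (fun q : ℝ×ℝ => q.2^2)
      ((2*p.2) • ContinuousLinearMap.snd ℝ ℝ ℝ) p := by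
    have h := HasDerivAt.comp_hasFDerivAt (f' := ContinuousLinearMap.snd ℝ ℝ ℝ) p
      (hasDerivAt_pow 2 p.2) hasFDerivAt_snd
    simpa [Function.comp_def] using h
  have h2' : HasFDerivAt (fun q : ℝ×ℝ => ga α q.1)
      ((ga1 α p.1) • ContinuousLinearMap.fst ℝ ℝ ℝ) p :=
    (hga hp).comp_hasFDerivAt p hasFDerivAt_fst
  have h4 : HasFDerivAt (fun q : ℝ×ℝ => 2*q.2)
      ((2:ℝ) • ContinuousLinearMap.snd ℝ ℝ ℝ) p := by
    have h := (((2:ℝ) • ContinuousLinearMap.snd ℝ ℝ ℝ)).hasFDerivAt (x := p)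
    exact h.congr_of_eventuallyEq (Filter.Eventually.of_forall fun q => by simp)
  have hA : fderiv ℝ (fun q : ℝ×ℝ => fa1 α q.1 + ga1 α q.1 * q.2^2) p = _ := (h1.add (h2.mul h3)).fderiv
  have hB : fderiv ℝ (fun q : ℝ×ℝ => ga α q.1 * (2*q.2)) p = _ := (h2'.mul h4).fderiv
  rw [hA, hB]
  simp only [ContinuousLinearMap.add_apply, ContinuousLinearMap.smul_apply,
    ContinuousLinearMap.coe_fst', ContinuousLinearMap.coe_snd', smul_eq_mul]
  have k1 : p.1^(-α-1) * p.1^(α+1) = 1 := key1 hp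
  have k2 : p.1^(α-1) * p.1^(α+1) = p.1^α * p.1^α := by
    rw [← Real.rpow_add hp, ← Real.rpow_add hp]; congr 1; ring
  have k3 : Real.exp (-1/p.1^α) * Real.exp (1/p.1^α) = 1 := by
    rw [← Real.exp_add, show -1/p.1^α + 1/p.1^α = (0:ℝ) by ring, Real.exp_zero]
  unfold fa2 ga2 ga ga1
  set a := p.1^α
  set Em := Real.exp (-1/p.1^α)
  set Ep := Real.exp (1/p.1^α)
  set y := p.2
  linear_combination (2*α*((α+1)*a+α)*Em*Ep + y^2*Ep^2*(-(2*α))*((α+1)*a + -α)) * k1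
    + (2*α*(α+1)*Em*Ep + y^2*Ep^2*2*α*(α+1)) * k2
    + (2*α*((α+1)*a+α) + 2*α*(α+1)*a^2) * k3

lemma Rbound (α c s2 : ℝ) (hα : 0 < α) (hc0 : 0 < c) (hc : c ≤ α/2)
    (hs0 : 0 ≤ s2) (hs : s2 ≤ 1) :
    2*α*(α+1)*((α-c)+s2*(α+c)) + 4*s2*(α+1)^2*(α-c)
      ≤ (10*α*(α+1)+8*(α+1)^2)*(α-c) := by
  have t1 : 0 ≤ 2*α*(α+1)*((1-s2)*(α+c)) :=
    mul_nonneg (by positivity) (mul_nonneg (by linarith) (by linarith))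
  have t2 : 0 ≤ 4*(α+1)^2*((α-c)*(2-s2)) :=
    mul_nonneg (by positivity) (mul_nonneg (by linarith) (by linarith))
  have t3 : 0 ≤ 2*α*(α+1)*(3*α-5*c) := mul_nonneg (by positivity) (by linarith)
  linarith [t1, t2, t3]

set_option maxHeartbeats 1000000
/-- for u₀ = x₁^{α+1}e^{−1/x₁^α} + x₁^{α+1}e^{1/x₁^α}x₂², on the
curves x₂ = s·h(x₁)e^{−1/x₁^α} with s² < 1,
det D²u₀ = 2α²{(1−s²) + (α+1)x₁^α(1+s²)/α} + O(x₁^{2α}) as x₁ → 0⁺;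
in particular det D²u₀ is positive and bounded near the origin in the cusp
{|x₂| < h(x₁)e^{−1/x₁^α}}. -/
theorem stmt_16 (α : ℝ) (hα : 0 < α)
    (h : ℝ → ℝ)
    (hh : ∀ t : ℝ, 0 < t → (α + 1) * t ^ α / α < 1 →
      h t = Real.sqrt ((1 + (α + 1) * t ^ α / α) / (1 - (α + 1) * t ^ α / α)))
    (u₀ : ℝ × ℝ → ℝ)
    (hu₀ : ∀ p : ℝ × ℝ, u₀ p =
      p.1 ^ (α + 1) * Real.exp (-1 / p.1 ^ α) +
        p.1 ^ (α + 1) * Real.exp (1 / p.1 ^ α) * p.2 ^ 2) :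
    (∀ s : ℝ, s ^ 2 < 1 →
      (fun t : ℝ => detD2 u₀ (t, s * h t * Real.exp (-1 / t ^ α)) -
          (2 * α ^ 2 * ((1 - s ^ 2) + (α + 1) * t ^ α * (1 + s ^ 2) / α)))
        =O[nhdsWithin 0 (Set.Ioi 0)] fun t : ℝ => t ^ (2 * α)) ∧
    ∃ ε C : ℝ, 0 < ε ∧ ∀ p : ℝ × ℝ, 0 < p.1 → p.1 < ε →
      |p.2| < h p.1 * Real.exp (-1 / p.1 ^ α) →
      0 < detD2 u₀ p ∧ detD2 u₀ p ≤ C := by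
  have hα1 : (0:ℝ) < α + 1 := by linarith
  set δ : ℝ := min 1 ((α/(2*(α+1)))^(α⁻¹)) with hδdef
  have hδpos : 0 < δ := lt_min one_pos (Real.rpow_pos_of_pos (by positivity) _)
  have hcb : ∀ x : ℝ, 0 < x → x < δ → (α+1)*x^α ≤ α/2 := by
    intro x hx hxδ
    have h2 : x^α < δ^α := Real.rpow_lt_rpow hx.le hxδ hα
    have h3 : δ^α ≤ ((α/(2*(α+1)))^(α⁻¹))^α :=
      Real.rpow_le_rpow hδpos.le (min_le_right _ _) hα.le
    have h4 : ((α/(2*(α+1)))^(α⁻¹))^α = α/(2*(α+1)) := by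
      rw [← Real.rpow_mul (by positivity), inv_mul_cancel₀ hα.ne', Real.rpow_one]
    have h5 : x^α ≤ α/(2*(α+1)) := by linarith
    have h6 := mul_le_mul_of_nonneg_left h5 hα1.le
    calc (α+1)*x^α ≤ (α+1)*(α/(2*(α+1))) := h6
      _ = α/2 := by field_simp
  -- generic bounds at a point 0 < x < δ
  have core : ∀ x : ℝ, 0 < x → x < δ →
      0 < (α+1)*x^α ∧ (α+1)*x^α ≤ α/2 ∧ x^α ≤ 1 ∧
      0 < 1 - (α+1)*x^α/α ∧ (α+1)*x^α/α < 1 := by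
    intro x hx hxδ
    have hap : 0 < x^α := Real.rpow_pos_of_pos hx α
    have hc := hcb x hx hxδ
    have hcp : 0 < (α+1)*x^α := mul_pos hα1 hap
    have ha1 : x^α ≤ 1 := by nlinarith
    have hden : (α+1)*x^α/α ≤ 1/2 := by rw [div_le_iff₀ hα]; linarith
    exact ⟨hcp, hc, ha1, by linarith, by linarith⟩
  constructor
  · -- big-O part
    intro s hs
    rw [Asymptotics.isBigO_iff]
    refine ⟨10*α*(α+1)+8*(α+1)^2, ?_⟩
    filter_upwards [Ioo_mem_nhdsGT_of_mem (Set.mem_Ico.mpr ⟨le_refl 0, hδpos⟩)] with t ht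
    obtain ⟨ht0, htδ⟩ := ht
    obtain ⟨hcp, hc, ha1, hden, hlt1⟩ := core t ht0 htδ
    have hαc : 0 < α - (α+1)*t^α := by linarith
    have hap : 0 < t^α := Real.rpow_pos_of_pos ht0 α
    have hdet := detkey hα u₀ hu₀ (t, s * h t * Real.exp (-1 / t ^ α)) ht0
    simp only at hdet
    rw [hdet]
    have hr0 : (0:ℝ) ≤ (1 + (α+1)*t^α/α) / (1 - (α+1)*t^α/α) := by positivity
    have hsq := Real.sq_sqrt hr0
    have hexp1 : Real.exp (-1/t^α) * Real.exp (1/t^α) = 1 := by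
      rw [← Real.exp_add, show -1/t^α + 1/t^α = (0:ℝ) by ring, Real.exp_zero]
    have hm : (s * h t * Real.exp (-1 / t ^ α))^2 * Real.exp (1/t^α)^2
        = s^2 * ((1 + (α+1)*t^α/α) / (1 - (α+1)*t^α/α)) := by
      rw [hh t ht0 hlt1]
      calc (s * Real.sqrt ((1 + (α+1)*t^α/α) / (1 - (α+1)*t^α/α)) * Real.exp (-1/t^α))^2
            * Real.exp (1/t^α)^2
          = s^2 * (Real.sqrt ((1 + (α+1)*t^α/α) / (1 - (α+1)*t^α/α)))^2
            * (Real.exp (-1/t^α) * Real.exp (1/t^α))^2 := by ring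
        _ = s^2 * ((1 + (α+1)*t^α/α) / (1 - (α+1)*t^α/α)) := by rw [hsq, hexp1]; ring
    rw [hm]
    have hkey : 2*α*(α + (α+1)*t^α + (α+1)*(t^α)^2)
        + s^2 * ((1 + (α+1)*t^α/α) / (1 - (α+1)*t^α/α)) *
          (2*α*(α - (α+1)*t^α + (α+1)*(t^α)^2) - 4*((α+1)*t^α - α)^2)
        - 2 * α ^ 2 * ((1 - s ^ 2) + (α + 1) * t ^ α * (1 + s ^ 2) / α)
        = t^α*t^α*(2*α*(α+1)*((α - (α+1)*t^α)+s^2*(α + (α+1)*t^α))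
            + 4*s^2*(α+1)^2*(α - (α+1)*t^α))/(α - (α+1)*t^α) := by
      field_simp
      ring
    rw [hkey]
    have hR0 : 0 ≤ 2*α*(α+1)*((α - (α+1)*t^α)+s^2*(α + (α+1)*t^α))
        + 4*s^2*(α+1)^2*(α - (α+1)*t^α) := by
      have := sq_nonneg s
      nlinarith [mul_nonneg (sq_nonneg s) hcp.le, mul_nonneg (sq_nonneg s) hαc.le]
    have hRK := Rbound α ((α+1)*t^α) (s^2) hα hcp hc (sq_nonneg s) hs.le
    have h2a : t^(2*α) = t^α*t^α := by
      rw [show (2:ℝ)*α = α+α by ring, Real.rpow_add ht0]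
    rw [Real.norm_eq_abs, Real.norm_eq_abs, h2a]
    have hnum0 : 0 ≤ t^α*t^α*(2*α*(α+1)*((α - (α+1)*t^α)+s^2*(α + (α+1)*t^α))
            + 4*s^2*(α+1)^2*(α - (α+1)*t^α))/(α - (α+1)*t^α) := by positivity
    rw [abs_of_nonneg hnum0, abs_of_nonneg (by positivity : (0:ℝ) ≤ t^α*t^α)]
    rw [div_le_iff₀ hαc]
    linarith [mul_le_mul_of_nonneg_left hRK (mul_nonneg hap.le hap.le)]
  · -- positivity and boundedness
    refine ⟨δ, 2*α*(3*α+2) + 3*(2*α*(2*α+1)), hδpos, ?_⟩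
    intro p hp1 hpδ hy
    obtain ⟨hcp, hc, ha1, hden, hlt1⟩ := core p.1 hp1 hpδ
    have hαc : 0 < α - (α+1)*p.1^α := by linarith
    have hap : 0 < p.1^α := Real.rpow_pos_of_pos hp1 α
    have hdet := detkey hα u₀ hu₀ p hp1
    have hr0 : (0:ℝ) ≤ (1 + (α+1)*p.1^α/α) / (1 - (α+1)*p.1^α/α) := by positivity
    have hsq := Real.sq_sqrt hr0
    have hexp1 : Real.exp (-1/p.1^α) * Real.exp (1/p.1^α) = 1 := by
      rw [← Real.exp_add, show -1/p.1^α + 1/p.1^α = (0:ℝ) by ring, Real.exp_zero]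
    rw [hh p.1 hp1 hlt1] at hy
    have hm0 : 0 ≤ p.2^2 * Real.exp (1/p.1^α)^2 := by positivity
    have hmr : p.2^2 * Real.exp (1/p.1^α)^2
        < (1 + (α+1)*p.1^α/α) / (1 - (α+1)*p.1^α/α) := by
      have h6 : p.2^2 < (Real.sqrt ((1 + (α+1)*p.1^α/α) / (1 - (α+1)*p.1^α/α))
          * Real.exp (-1/p.1^α))^2 := by
        rw [← sq_abs, sq, sq]
        exact mul_self_lt_mul_self (abs_nonneg p.2) hy
      calc p.2^2 * Real.exp (1/p.1^α)^2
          < (Real.sqrt ((1 + (α+1)*p.1^α/α) / (1 - (α+1)*p.1^α/α))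
              * Real.exp (-1/p.1^α))^2 * Real.exp (1/p.1^α)^2 :=
            mul_lt_mul_of_pos_right h6 (by positivity)
        _ = (Real.sqrt ((1 + (α+1)*p.1^α/α) / (1 - (α+1)*p.1^α/α)))^2
              * (Real.exp (-1/p.1^α) * Real.exp (1/p.1^α))^2 := by ring
        _ = (1 + (α+1)*p.1^α/α) / (1 - (α+1)*p.1^α/α) := by rw [hsq, hexp1]; ring
    have hre : (1 + (α+1)*p.1^α/α) / (1 - (α+1)*p.1^α/α)
        = (α + (α+1)*p.1^α)/(α - (α+1)*p.1^α) := by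
      rw [div_eq_div_iff hden.ne' hαc.ne']
      field_simp
    rw [hre] at hmr hsq hr0
    have hr3 : (α + (α+1)*p.1^α)/(α - (α+1)*p.1^α) ≤ 3 := by
      rw [div_le_iff₀ hαc]; linarith
    constructor
    · -- positivity
      rw [hdet]
      rcases le_or_gt 0 (2*α*(α - (α+1)*p.1^α + (α+1)*(p.1^α)^2) - 4*((α+1)*p.1^α - α)^2)
        with hQ | hQ
      · nlinarith [mul_nonneg hm0 hQ, mul_pos hα1 hap, sq_nonneg (p.1^α)]
      · have key3 : (α - (α+1)*p.1^α) *
            (2*α*(α + (α+1)*p.1^α + (α+1)*(p.1^α)^2)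
              + (α + (α+1)*p.1^α)/(α - (α+1)*p.1^α) *
                (2*α*(α - (α+1)*p.1^α + (α+1)*(p.1^α)^2) - 4*((α+1)*p.1^α - α)^2))
            = 4*((α+1)*p.1^α)*(α^2 - ((α+1)*p.1^α)^2) + 4*α^2*(α+1)*(p.1^α)^2 := by
          field_simp
          ring
        have hRHS : 0 < 4*((α+1)*p.1^α)*(α^2 - ((α+1)*p.1^α)^2) + 4*α^2*(α+1)*(p.1^α)^2 := by
          nlinarith [hcp, hc, hα, mul_pos hα1 (mul_pos hap hap)]
        have hPrQ : 0 < 2*α*(α + (α+1)*p.1^α + (α+1)*(p.1^α)^2)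
              + (α + (α+1)*p.1^α)/(α - (α+1)*p.1^α) *
                (2*α*(α - (α+1)*p.1^α + (α+1)*(p.1^α)^2) - 4*((α+1)*p.1^α - α)^2) := by
          by_contra hcon
          push_neg at hcon
          nlinarith [mul_nonpos_of_nonneg_of_nonpos hαc.le hcon]
        nlinarith [mul_pos_of_neg_of_neg
          (sub_neg.mpr hmr) hQ, hPrQ]
    · -- upper bound
      rw [hdet]
      have hQle : 2*α*(α - (α+1)*p.1^α + (α+1)*(p.1^α)^2) - 4*((α+1)*p.1^α - α)^2
          ≤ 2*α*(2*α+1) := by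
        nlinarith [sq_nonneg ((α+1)*p.1^α - α), hcp, hap, ha1, hα,
          mul_nonneg hap.le hap.le]
      have hPle : 2*α*(α + (α+1)*p.1^α + (α+1)*(p.1^α)^2) ≤ 2*α*(3*α+2) := by
        nlinarith [hcp, hc, hap, ha1, hα, mul_nonneg hap.le hap.le]
      have hmQ : p.2^2 * Real.exp (1/p.1^α)^2 *
          (2*α*(α - (α+1)*p.1^α + (α+1)*(p.1^α)^2) - 4*((α+1)*p.1^α - α)^2)
          ≤ 3*(2*α*(2*α+1)) := by
        rcases le_or_gt 0 (2*α*(α - (α+1)*p.1^α + (α+1)*(p.1^α)^2) - 4*((α+1)*p.1^α - α)^2)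
          with hQ | hQ
        · have hm3 : p.2^2 * Real.exp (1/p.1^α)^2 ≤ 3 := le_trans hmr.le hr3
          nlinarith [mul_le_mul_of_nonneg_right hm3 hQ]
        · have : p.2^2 * Real.exp (1/p.1^α)^2 *
              (2*α*(α - (α+1)*p.1^α + (α+1)*(p.1^α)^2) - 4*((α+1)*p.1^α - α)^2) ≤ 0 :=
            mul_nonpos_of_nonneg_of_nonpos hm0 hQ.le
          nlinarith [hα]
      linarith
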